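/- The number of group automata on state set Fin n over a k-letter alphabet that are not strongly connected is at most Z_{n,k} = Σ_{r=1}^{⌊n/2⌋} C(n,r) · (r! · (n-r)!)^k. -/

import Mathlib

open Finset

private lemma pres_compl' {n : ℕ} {S : Finset (Fin n)} {σ : Equiv.Perm (Fin n)}
    (h : ∀ x ∈ S, σ x ∈ S) : ∀ x ∉ S, σ x ∉ S := by
  intro x hx hσx
  have himg : S.image σ = S := by
    apply Finset.eq_of_subset_of_card_le
    · intro y hy
      obtain ⟨z, hz, rfl⟩ := Finset.mem_image.mp hy
      exact h z hz
    · rw [Finset.card_image_of_injective _ σ.injective]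
  rw [← himg] at hσx
  obtain ⟨z, hz, hzx⟩ := Finset.mem_image.mp hσx
  exact hx ((σ.injective hzx) ▸ hz)

private lemma card_pres_le' {n : ℕ} (S : Finset (Fin n)) :
    Fintype.card {σ : Equiv.Perm (Fin n) // ∀ x ∈ S, σ x ∈ S} ≤
      S.card.factorial * (n - S.card).factorial := by
  classical
  set f : {σ : Equiv.Perm (Fin n) // ∀ x ∈ S, σ x ∈ S} →
      ({x // x ∈ S} ↪ {x // x ∈ S}) × ({x // x ∉ S} ↪ {x // x ∉ S}) :=
    fun σ => (⟨fun x => ⟨σ.1 x, σ.2 x x.2⟩,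
        fun a b hab => Subtype.ext (σ.1.injective (congrArg Subtype.val hab))⟩,
      ⟨fun x => ⟨σ.1 x, pres_compl' σ.2 x x.2⟩,
        fun a b hab => Subtype.ext (σ.1.injective (congrArg Subtype.val hab))⟩) with hf
  have hinj : Function.Injective f := by
    intro σ τ hστ
    have h1 := congrArg Prod.fst hστ
    have h2 := congrArg Prod.snd hστ
    refine Subtype.ext (Equiv.ext fun x => ?_)
    by_cases hx : x ∈ S
    · have := DFunLike.congr_fun h1 ⟨x, hx⟩
      exact congrArg Subtype.val this
    · have := DFunLike.congr_fun h2 ⟨x, hx⟩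
      exact congrArg Subtype.val this
  calc Fintype.card {σ : Equiv.Perm (Fin n) // ∀ x ∈ S, σ x ∈ S}
      ≤ Fintype.card (({x // x ∈ S} ↪ {x // x ∈ S}) × ({x // x ∉ S} ↪ {x // x ∉ S})) :=
        Fintype.card_le_of_injective f hinj
    _ = S.card.factorial * (n - S.card).factorial := by
        rw [Fintype.card_prod, Fintype.card_embedding_eq, Fintype.card_embedding_eq,
          Fintype.card_coe, Nat.descFactorial_self]
        have : Fintype.card {x : Fin n // x ∉ S} = n - S.card := by
          rw [Fintype.card_subtype_compl, Fintype.card_fin, Fintype.card_coe]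
        rw [this, Nat.descFactorial_self]

private lemma card_tuple_pres_le' {n k : ℕ} (S : Finset (Fin n)) :
    (Finset.univ.filter
        (fun π : Fin k → Equiv.Perm (Fin n) => ∀ a, ∀ x ∈ S, π a x ∈ S)).card ≤
      (S.card.factorial * (n - S.card).factorial) ^ k := by
  classical
  rw [← Fintype.card_subtype]
  have e : {π : Fin k → Equiv.Perm (Fin n) // ∀ a, ∀ x ∈ S, π a x ∈ S} ≃
      (Fin k → {σ : Equiv.Perm (Fin n) // ∀ x ∈ S, σ x ∈ S}) :=
    Equiv.subtypePiEquivPi (p := fun (_ : Fin k) (σ : Equiv.Perm (Fin n)) => ∀ x ∈ S, σ x ∈ S)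
  rw [Fintype.card_congr e, Fintype.card_fun, Fintype.card_fin]
  exact Nat.pow_le_pow_left (card_pres_le' S) k

private lemma exists_invariant' {n k : ℕ} {π : Fin k → Equiv.Perm (Fin n)}
    (h : ¬ ∀ p q : Fin n, ∃ u : List (Fin k), u.foldl (fun x a => π a x) p = q) :
    ∃ S : Finset (Fin n), S.Nonempty ∧ S.card ≤ n / 2 ∧ ∀ a, ∀ x ∈ S, π a x ∈ S := by
  classical
  push_neg at h
  obtain ⟨p, q, hq⟩ := h
  set T : Finset (Fin n) :=
    Finset.univ.filter (fun x => ∃ u : List (Fin k), u.foldl (fun x a => π a x) p = x) with hT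
  have hpT : p ∈ T := by
    simp only [hT, Finset.mem_filter, Finset.mem_univ, true_and]
    exact ⟨[], rfl⟩
  have hqT : q ∉ T := by
    simp only [hT, Finset.mem_filter, Finset.mem_univ, true_and]
    push_neg
    exact hq
  have hinv : ∀ a, ∀ x ∈ T, π a x ∈ T := by
    intro a x hx
    simp only [hT, Finset.mem_filter, Finset.mem_univ, true_and] at hx ⊢
    obtain ⟨u, hu⟩ := hx
    exact ⟨u ++ [a], by simp [List.foldl_append, hu]⟩
  by_cases hc : T.card ≤ n / 2
  · exact ⟨T, ⟨p, hpT⟩, hc, hinv⟩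
  · refine ⟨Tᶜ, ⟨q, Finset.mem_compl.mpr hqT⟩, ?_, ?_⟩
    · rw [Finset.card_compl, Fintype.card_fin]
      have hTn : T.card ≤ n := by
        simpa using Finset.card_le_card (Finset.subset_univ T)
      omega
    · intro a x hx
      exact Finset.mem_compl.mpr (pres_compl' (hinv a) x (Finset.mem_compl.mp hx))

/-- The number of group automata on `Fin n` over a `k`-letter alphabet that are not
strongly connected is at most `Σ_{r=1}^{⌊n/2⌋} C(n,r) · (r! · (n-r)!)^k`. -/
theorem stmt_19 (n k : ℕ) :
    Nat.card {π : Fin k → Equiv.Perm (Fin n) //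
        ¬ ∀ p q : Fin n, ∃ u : List (Fin k), u.foldl (fun x a => π a x) p = q} ≤
      ∑ r ∈ Finset.Icc 1 (n / 2),
        n.choose r * (r.factorial * (n - r).factorial) ^ k := by
  classical
  rw [Nat.card_eq_fintype_card, Fintype.card_subtype]
  set A : Finset (Finset (Fin n)) :=
    (Finset.Icc 1 (n / 2)).biUnion (fun r => Finset.powersetCard r Finset.univ) with hA
  have hsub : Finset.univ.filter
      (fun π : Fin k → Equiv.Perm (Fin n) =>
        ¬ ∀ p q : Fin n, ∃ u : List (Fin k), u.foldl (fun x a => π a x) p = q) ⊆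
      A.biUnion (fun S => Finset.univ.filter
        (fun π : Fin k → Equiv.Perm (Fin n) => ∀ a, ∀ x ∈ S, π a x ∈ S)) := by
    intro π hπ
    simp only [Finset.mem_filter, Finset.mem_univ, true_and] at hπ
    obtain ⟨S, hne, hle, hinv⟩ := exists_invariant' hπ
    refine Finset.mem_biUnion.mpr ⟨S, ?_, ?_⟩
    · refine Finset.mem_biUnion.mpr ⟨S.card, Finset.mem_Icc.mpr ⟨hne.card_pos, hle⟩, ?_⟩
      exact Finset.mem_powersetCard.mpr ⟨Finset.subset_univ _, rfl⟩
    · simp only [Finset.mem_filter, Finset.mem_univ, true_and]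
      exact hinv
  have hdisj : (↑(Finset.Icc 1 (n / 2)) : Set ℕ).PairwiseDisjoint
      (fun r => Finset.powersetCard r (Finset.univ : Finset (Fin n))) := by
    intro r _ s _ hrs
    refine Finset.disjoint_left.mpr fun S hS hS' => hrs ?_
    rw [← (Finset.mem_powersetCard.mp hS).2, ← (Finset.mem_powersetCard.mp hS').2]
  calc (Finset.univ.filter _).card
      ≤ (A.biUnion (fun S => Finset.univ.filter
          (fun π : Fin k → Equiv.Perm (Fin n) => ∀ a, ∀ x ∈ S, π a x ∈ S))).card :=
        Finset.card_le_card hsub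
    _ ≤ ∑ S ∈ A, (Finset.univ.filter
          (fun π : Fin k → Equiv.Perm (Fin n) => ∀ a, ∀ x ∈ S, π a x ∈ S)).card :=
        Finset.card_biUnion_le
    _ ≤ ∑ S ∈ A, (S.card.factorial * (n - S.card).factorial) ^ k :=
        Finset.sum_le_sum fun S _ => card_tuple_pres_le' S
    _ = ∑ r ∈ Finset.Icc 1 (n / 2), ∑ S ∈ Finset.powersetCard r Finset.univ,
          (S.card.factorial * (n - S.card).factorial) ^ k := by
        rw [hA, Finset.sum_biUnion hdisj]
    _ = ∑ r ∈ Finset.Icc 1 (n / 2),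
          n.choose r * (r.factorial * (n - r).factorial) ^ k := by
        refine Finset.sum_congr rfl fun r _ => ?_
        rw [Finset.sum_congr rfl (fun S hS => by
          rw [(Finset.mem_powersetCard.mp hS).2]),
          Finset.sum_const, Finset.card_powersetCard, Finset.card_univ, Fintype.card_fin,
          smul_eq_mul]
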